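/- Let H₁, …, H_p be finite-dimensional complex Hilbert spaces and let H = H₁ ⊗ ⋯ ⊗ H_p carry the induced inner product. Call a set S of unit vectors in H stochastically invariant (SI) if for every φ ∈ S and all linear operators A₁, …, A_p (each Aᵢ acting on Hᵢ) with (A₁ ⊗ ⋯ ⊗ A_p)φ ≠ 0, the normalized vector (A₁ ⊗ ⋯ ⊗ A_p)φ / ‖(A₁ ⊗ ⋯ ⊗ A_p)φ‖ also belongs to S. Define E(χ,S) = 1 − sup_{φ∈S} |⟨χ, φ⟩|² for unit vectors χ. Then for every nonempty SI set S, every unit vector ψ in H, and every finite family of operators M₁, …, M_m on H₁ satisfying Σⱼ Mⱼ† Mⱼ = 1 (the identity on H₁), setting pⱼ = ‖(Mⱼ ⊗ 1 ⊗ ⋯ ⊗ 1)ψ‖² and ψⱼ = (Mⱼ ⊗ 1 ⊗ ⋯ ⊗ 1)ψ / √pⱼ whenever pⱼ ≠ 0, one has E(ψ,S) ≥ Σ_{j : pⱼ ≠ 0} pⱼ E(ψⱼ,S). In other words, E(·,S) does not increase on average under a local measurement performed by one party, so E(·,S) is an entanglement monotone. -/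

import Mathlib

open scoped InnerProductSpace Matrix

/-- The matrix of a local operator `A₁ ⊗ ⋯ ⊗ A_p` on the `p`-partite Hilbert space
`H = H₁ ⊗ ⋯ ⊗ H_p`, modelled concretely as `EuclideanSpace ℂ (Π i, ι i)` where `ι i`
indexes an orthonormal basis of the `i`-th particle's space. -/
noncomputable def localOperator {p : ℕ} {ι : Fin p → Type*} [∀ i, Fintype (ι i)]
    (A : ∀ i, Matrix (ι i) (ι i) ℂ) : Matrix (∀ i, ι i) (∀ i, ι i) ℂ :=
  fun x y => ∏ i, A i (x i) (y i)

/-- The action of the local operator `A₁ ⊗ ⋯ ⊗ A_p` on a state of the multipartite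
Hilbert space. -/
noncomputable def applyLocal {p : ℕ} {ι : Fin p → Type*} [∀ i, Fintype (ι i)]
    (A : ∀ i, Matrix (ι i) (ι i) ℂ) (ψ : EuclideanSpace ℂ (∀ i, ι i)) :
    EuclideanSpace ℂ (∀ i, ι i) :=
  (WithLp.equiv 2 _).symm ((localOperator A).mulVec ((WithLp.equiv 2 _) ψ))

/-- The action of the local operator `M ⊗ 1 ⊗ ⋯ ⊗ 1`, corresponding to an operator `M`
applied by the first party alone. -/
noncomputable def applyFirstParty {p : ℕ} {ι : Fin (p + 1) → Type*}
    [∀ i, Fintype (ι i)] [∀ i, DecidableEq (ι i)] (M : Matrix (ι 0) (ι 0) ℂ)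
    (ψ : EuclideanSpace ℂ (∀ i, ι i)) : EuclideanSpace ℂ (∀ i, ι i) :=
  applyLocal (Function.update (fun i => (1 : Matrix (ι i) (ι i) ℂ)) 0 M) ψ

section Aux

variable {q : ℕ} {ι : Fin q → Type*} [∀ i, Fintype (ι i)] [∀ i, DecidableEq (ι i)]

lemma localOperator_mul (A B : ∀ i, Matrix (ι i) (ι i) ℂ) :
    localOperator A * localOperator B = localOperator (fun i => A i * B i) := by
  ext x y
  simp only [Matrix.mul_apply, localOperator]
  rw [Fintype.prod_sum]
  exact Finset.sum_congr rfl fun z _ => (Finset.prod_mul_distrib).symm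

lemma localOperator_conjTranspose (A : ∀ i, Matrix (ι i) (ι i) ℂ) :
    (localOperator A)ᴴ = localOperator (fun i => (A i)ᴴ) := by
  ext x y
  simp [localOperator, Matrix.conjTranspose_apply, star_prod]

lemma localOperator_one :
    localOperator (fun i => (1 : Matrix (ι i) (ι i) ℂ)) = 1 := by
  ext x y
  simp only [localOperator, Matrix.one_apply]
  by_cases h : x = y
  · subst h; simp
  · rw [if_neg h]
    obtain ⟨i, hi⟩ := Function.ne_iff.mp h
    exact Finset.prod_eq_zero (Finset.mem_univ i) (by simp [Matrix.one_apply, hi])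

end Aux

section Aux2

variable {p : ℕ} {ι : Fin (p + 1) → Type*} [∀ i, Fintype (ι i)] [∀ i, DecidableEq (ι i)]

lemma localOperator_update_sum {m : ℕ} (C : Fin m → Matrix (ι 0) (ι 0) ℂ) :
    ∑ j, localOperator (Function.update (fun i => (1 : Matrix (ι i) (ι i) ℂ)) 0 (C j))
      = localOperator (Function.update (fun i => (1 : Matrix (ι i) (ι i) ℂ)) 0 (∑ j, C j)) := by
  ext x y
  simp only [Matrix.sum_apply, localOperator, Fin.prod_univ_succ, Function.update_self,
    Function.update_of_ne (Fin.succ_ne_zero _)]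
  rw [← Finset.sum_mul]

end Aux2

section Aux3

variable {p : ℕ} {ι : Fin (p + 1) → Type*} [∀ i, Fintype (ι i)] [∀ i, DecidableEq (ι i)]

lemma applyFirstParty_eq (M : Matrix (ι 0) (ι 0) ℂ) (χ : EuclideanSpace ℂ (∀ i, ι i)) :
    applyFirstParty M χ =
      Matrix.toEuclideanLin
        (localOperator (Function.update (fun i => (1 : Matrix (ι i) (ι i) ℂ)) 0 M)) χ :=
  (Matrix.toEuclideanLin_apply _ _).symm

lemma sum_inner_applyFirstParty {m : ℕ} (M : Fin m → Matrix (ι 0) (ι 0) ℂ)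
    (hM : ∑ j, (M j)ᴴ * M j = 1) (χ η : EuclideanSpace ℂ (∀ i, ι i)) :
    ∑ j, ⟪applyFirstParty (M j) χ, applyFirstParty (M j) η⟫_ℂ = ⟪χ, η⟫_ℂ := by
  set N : Fin m → Matrix (∀ i, ι i) (∀ i, ι i) ℂ := fun j =>
    localOperator (Function.update (fun i => (1 : Matrix (ι i) (ι i) ℂ)) 0 (M j)) with hN
  have hterm : ∀ j, ⟪applyFirstParty (M j) χ, applyFirstParty (M j) η⟫_ℂ
      = ⟪χ, Matrix.toEuclideanLin ((N j)ᴴ * (N j)) η⟫_ℂ := by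
    intro j
    have hcomp : Matrix.toEuclideanLin ((N j)ᴴ * (N j)) η
        = Matrix.toEuclideanLin ((N j)ᴴ) (Matrix.toEuclideanLin (N j) η) := by
      simp only [Matrix.toEuclideanLin_apply, Equiv.apply_symm_apply, Matrix.mulVec_mulVec]
    rw [hcomp, applyFirstParty_eq, applyFirstParty_eq,
      Matrix.toEuclideanLin_conjTranspose_eq_adjoint, LinearMap.adjoint_inner_right]
  have hNsum : ∑ j, (N j)ᴴ * (N j) = 1 := by
    have hNj : ∀ j, (N j)ᴴ * (N j)
        = localOperator (Function.update (fun i => (1 : Matrix (ι i) (ι i) ℂ)) 0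
            ((M j)ᴴ * M j)) := by
      intro j
      rw [hN, localOperator_conjTranspose, localOperator_mul]
      have hfam : (fun i => (Function.update (fun i => (1 : Matrix (ι i) (ι i) ℂ)) 0 (M j) i)ᴴ
            * Function.update (fun i => (1 : Matrix (ι i) (ι i) ℂ)) 0 (M j) i)
          = Function.update (fun i => (1 : Matrix (ι i) (ι i) ℂ)) 0 ((M j)ᴴ * M j) := by
        funext i
        by_cases h : i = 0
        · subst h; simp
        · simp [Function.update_of_ne h]
      rw [hfam]
    simp_rw [hNj]
    rw [localOperator_update_sum, hM]
    have : Function.update (fun i => (1 : Matrix (ι i) (ι i) ℂ)) 0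
        ((fun i => (1 : Matrix (ι i) (ι i) ℂ)) 0) = fun i => (1 : Matrix (ι i) (ι i) ℂ) :=
      Function.update_eq_self 0 _
    rw [show (1 : Matrix (ι 0) (ι 0) ℂ) = (fun i => (1 : Matrix (ι i) (ι i) ℂ)) 0 from rfl,
      this, localOperator_one]
  calc ∑ j, ⟪applyFirstParty (M j) χ, applyFirstParty (M j) η⟫_ℂ
      = ∑ j, ⟪χ, Matrix.toEuclideanLin ((N j)ᴴ * (N j)) η⟫_ℂ := by simp_rw [hterm]
    _ = ⟪χ, ∑ j, Matrix.toEuclideanLin ((N j)ᴴ * (N j)) η⟫_ℂ := (inner_sum _ _ _).symm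
    _ = ⟪χ, η⟫_ℂ := by
        congr 1
        rw [← LinearMap.sum_apply, ← map_sum, hNsum]
        simp [Matrix.toEuclideanLin_apply, Matrix.one_mulVec]

end Aux3


/-- **Monotonicity of the geometric measures.** Let `S` be a nonempty stochastically
invariant (SI) set of unit vectors of the `p`-partite Hilbert space: `S` is closed under
taking normalized nonzero images under arbitrary local operators `A₁ ⊗ ⋯ ⊗ A_p`.
Let `E(χ,S) = 1 - sup_{φ∈S} |⟨χ,φ⟩|²`.  For every unit vector `ψ` and every local
measurement `M₁, …, M_m` of the first party (`∑ j, Mⱼ† Mⱼ = 1`), with outcome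
probabilities `pⱼ = ‖(Mⱼ ⊗ 1 ⊗ ⋯ ⊗ 1)ψ‖²` and post-measurement states
`ψⱼ = (Mⱼ ⊗ 1 ⊗ ⋯ ⊗ 1)ψ / √pⱼ`, one has `E(ψ,S) ≥ ∑_{j : pⱼ ≠ 0} pⱼ E(ψⱼ,S)`;
that is, `E(·,S)` is an entanglement monotone. -/
theorem geometric_measure_is_entanglement_monotone
    {p m : ℕ} {ι : Fin (p + 1) → Type*} [∀ i, Fintype (ι i)] [∀ i, DecidableEq (ι i)]
    (S : Set (EuclideanSpace ℂ (∀ i, ι i))) (hS : S.Nonempty)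
    (hunit : ∀ φ ∈ S, ‖φ‖ = 1)
    (hSI : ∀ φ ∈ S, ∀ A : ∀ i, Matrix (ι i) (ι i) ℂ,
      applyLocal A φ ≠ 0 → (‖applyLocal A φ‖⁻¹ • applyLocal A φ) ∈ S)
    (ψ : EuclideanSpace ℂ (∀ i, ι i)) (hψ : ‖ψ‖ = 1)
    (M : Fin m → Matrix (ι 0) (ι 0) ℂ)
    (hM : ∑ j, (M j)ᴴ * M j = 1) :
    (1 - ⨆ φ : S, ‖⟪ψ, (φ : EuclideanSpace ℂ (∀ i, ι i))⟫_ℂ‖ ^ 2) ≥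
      ∑ j ∈ Finset.univ.filter (fun j => ‖applyFirstParty (M j) ψ‖ ^ 2 ≠ 0),
        ‖applyFirstParty (M j) ψ‖ ^ 2 *
          (1 - ⨆ φ : S,
            ‖⟪(Real.sqrt (‖applyFirstParty (M j) ψ‖ ^ 2))⁻¹ • applyFirstParty (M j) ψ,
              (φ : EuclideanSpace ℂ (∀ i, ι i))⟫_ℂ‖ ^ 2) := by
  have hSne : Nonempty S := hS.to_subtype
  simp only [Real.sqrt_sq, norm_nonneg]
  have hnorm : ∀ χ : EuclideanSpace ℂ (∀ i, ι i), ∑ j, ‖applyFirstParty (M j) χ‖ ^ 2 = ‖χ‖ ^ 2 := by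
    intro χ
    have h := sum_inner_applyFirstParty M hM χ χ
    simp_rw [inner_self_eq_norm_sq_to_K] at h
    exact_mod_cast h
  have hbdd : ∀ χ : EuclideanSpace ℂ (∀ i, ι i), BddAbove (Set.range fun φ : S => ‖⟪χ, (φ : EuclideanSpace ℂ (∀ i, ι i))⟫_ℂ‖ ^ 2) := by
    intro χ
    refine ⟨‖χ‖ ^ 2, ?_⟩
    rintro r ⟨φ, rfl⟩
    have h1 : ‖⟪χ, (φ : EuclideanSpace ℂ (∀ i, ι i))⟫_ℂ‖ ≤ ‖χ‖ := by
      have h2 := norm_inner_le_norm (𝕜 := ℂ) χ (φ : EuclideanSpace ℂ (∀ i, ι i))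
      rwa [hunit φ φ.2, mul_one] at h2
    exact pow_le_pow_left₀ (norm_nonneg _) h1 2
  have hG0 : ∀ χ : EuclideanSpace ℂ (∀ i, ι i), 0 ≤ ⨆ φ : S, ‖⟪χ, (φ : EuclideanSpace ℂ (∀ i, ι i))⟫_ℂ‖ ^ 2 := fun χ =>
    le_ciSup_of_le (hbdd χ) ⟨hS.some, hS.some_mem⟩ (by positivity)
  set F : Finset (Fin m) :=
    Finset.univ.filter (fun j => ‖applyFirstParty (M j) ψ‖ ^ 2 ≠ 0) with hF
  have hsumF : ∑ j ∈ F, ‖applyFirstParty (M j) ψ‖ ^ 2 = 1 := by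
    rw [hF, Finset.sum_filter_of_ne (fun x _ h => h), hnorm ψ, hψ, one_pow]
  have hkey : (⨆ φ : S, ‖⟪ψ, (φ : EuclideanSpace ℂ (∀ i, ι i))⟫_ℂ‖ ^ 2) ≤
      ∑ j ∈ F, ‖applyFirstParty (M j) ψ‖ ^ 2 *
        (⨆ φ : S, ‖⟪(‖applyFirstParty (M j) ψ‖⁻¹ • applyFirstParty (M j) ψ),
          (φ : EuclideanSpace ℂ (∀ i, ι i))⟫_ℂ‖ ^ 2) := by
    refine ciSup_le ?_
    rintro ⟨φ, hφ⟩
    show ‖⟪ψ, φ⟫_ℂ‖ ^ 2 ≤ _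
    have hφ1 : ‖φ‖ = 1 := hunit φ hφ
    have hsplit : ⟪ψ, φ⟫_ℂ = ∑ j ∈ F, ⟪applyFirstParty (M j) ψ, applyFirstParty (M j) φ⟫_ℂ := by
      rw [hF, Finset.sum_filter_of_ne, sum_inner_applyFirstParty M hM ψ φ]
      intro j _ hne h2
      apply hne
      have h3 : applyFirstParty (M j) ψ = 0 := by
        rw [← norm_eq_zero]
        exact pow_eq_zero_iff (n := 2) (by norm_num) |>.mp h2
      rw [h3, inner_zero_left]
    set g : Fin m → ℝ := fun j =>
      Real.sqrt (⨆ φ : S, ‖⟪(‖applyFirstParty (M j) ψ‖⁻¹ • applyFirstParty (M j) ψ),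
        (φ : EuclideanSpace ℂ (∀ i, ι i))⟫_ℂ‖ ^ 2) with hg
    have hpt : ∀ j ∈ F, ‖⟪applyFirstParty (M j) ψ, applyFirstParty (M j) φ⟫_ℂ‖ ≤
        ‖applyFirstParty (M j) φ‖ * (‖applyFirstParty (M j) ψ‖ * g j) := by
      intro j hj
      have hpj : ‖applyFirstParty (M j) ψ‖ ≠ 0 := by
        intro h
        exact (Finset.mem_filter.mp hj).2 (by rw [h]; norm_num)
      by_cases h0 : applyFirstParty (M j) φ = 0
      · rw [h0, inner_zero_right, norm_zero, norm_zero, zero_mul]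
      · have hb : ‖applyFirstParty (M j) φ‖ ≠ 0 := norm_ne_zero_iff.mpr h0
        have hmem : (‖applyFirstParty (M j) φ‖⁻¹ • applyFirstParty (M j) φ) ∈ S :=
          hSI φ hφ _ h0
        have hrel : ⟪(‖applyFirstParty (M j) ψ‖⁻¹ • applyFirstParty (M j) ψ),
            (‖applyFirstParty (M j) φ‖⁻¹ • applyFirstParty (M j) φ)⟫_ℂ
            = ((‖applyFirstParty (M j) ψ‖ : ℂ))⁻¹ * (((‖applyFirstParty (M j) φ‖ : ℂ))⁻¹ *
              ⟪applyFirstParty (M j) ψ, applyFirstParty (M j) φ⟫_ℂ) := by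
          rw [RCLike.real_smul_eq_coe_smul (K := ℂ), RCLike.real_smul_eq_coe_smul (K := ℂ),
            inner_smul_left, inner_smul_right]
          simp [Complex.conj_ofReal, Complex.ofReal_inv]
        have hnormeq : ‖⟪(‖applyFirstParty (M j) ψ‖⁻¹ • applyFirstParty (M j) ψ),
            (‖applyFirstParty (M j) φ‖⁻¹ • applyFirstParty (M j) φ)⟫_ℂ‖
            = ‖applyFirstParty (M j) ψ‖⁻¹ * (‖applyFirstParty (M j) φ‖⁻¹ *
              ‖⟪applyFirstParty (M j) ψ, applyFirstParty (M j) φ⟫_ℂ‖) := by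
          rw [hrel]
          simp [norm_mul, norm_inv, Complex.norm_real, abs_norm]
        have hle : ‖⟪(‖applyFirstParty (M j) ψ‖⁻¹ • applyFirstParty (M j) ψ),
            (‖applyFirstParty (M j) φ‖⁻¹ • applyFirstParty (M j) φ)⟫_ℂ‖ ≤ g j := by
          rw [hg]
          refine (Real.le_sqrt (norm_nonneg _) (hG0 _)).mpr ?_
          exact le_ciSup (hbdd _) (⟨_, hmem⟩ : S)
        have h5 : ‖⟪applyFirstParty (M j) ψ, applyFirstParty (M j) φ⟫_ℂ‖
            = ‖applyFirstParty (M j) ψ‖ * (‖applyFirstParty (M j) φ‖ *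
              ‖⟪(‖applyFirstParty (M j) ψ‖⁻¹ • applyFirstParty (M j) ψ),
                (‖applyFirstParty (M j) φ‖⁻¹ • applyFirstParty (M j) φ)⟫_ℂ‖) := by
          rw [hnormeq]
          field_simp
        rw [h5, mul_left_comm]
        exact mul_le_mul_of_nonneg_left
          (mul_le_mul_of_nonneg_left hle (norm_nonneg _)) (norm_nonneg _)
    have h1 : ‖⟪ψ, φ⟫_ℂ‖ ≤
        ∑ j ∈ F, ‖applyFirstParty (M j) φ‖ * (‖applyFirstParty (M j) ψ‖ * g j) := by
      rw [hsplit]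
      exact (norm_sum_le _ _).trans (Finset.sum_le_sum hpt)
    have h2 := Finset.sum_mul_sq_le_sq_mul_sq F (fun j => ‖applyFirstParty (M j) φ‖)
      (fun j => ‖applyFirstParty (M j) ψ‖ * g j)
    have h3 : ∑ j ∈ F, ‖applyFirstParty (M j) φ‖ ^ 2 ≤ 1 := by
      have h4 : ∑ j ∈ F, ‖applyFirstParty (M j) φ‖ ^ 2
          ≤ ∑ j, ‖applyFirstParty (M j) φ‖ ^ 2 :=
        Finset.sum_le_sum_of_subset_of_nonneg (Finset.filter_subset _ _)
          (fun j _ _ => by positivity)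
      rw [hnorm φ, hφ1, one_pow] at h4
      exact h4
    calc ‖⟪ψ, φ⟫_ℂ‖ ^ 2
        ≤ (∑ j ∈ F, ‖applyFirstParty (M j) φ‖ * (‖applyFirstParty (M j) ψ‖ * g j)) ^ 2 :=
          pow_le_pow_left₀ (norm_nonneg _) h1 2
      _ ≤ (∑ j ∈ F, ‖applyFirstParty (M j) φ‖ ^ 2) *
            ∑ j ∈ F, (‖applyFirstParty (M j) ψ‖ * g j) ^ 2 := h2
      _ ≤ 1 * ∑ j ∈ F, (‖applyFirstParty (M j) ψ‖ * g j) ^ 2 :=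
          mul_le_mul_of_nonneg_right h3 (Finset.sum_nonneg fun j _ => sq_nonneg _)
      _ = ∑ j ∈ F, ‖applyFirstParty (M j) ψ‖ ^ 2 *
            (⨆ φ : S, ‖⟪(‖applyFirstParty (M j) ψ‖⁻¹ • applyFirstParty (M j) ψ),
              (φ : EuclideanSpace ℂ (∀ i, ι i))⟫_ℂ‖ ^ 2) := by
          rw [one_mul]
          refine Finset.sum_congr rfl fun j _ => ?_
          rw [mul_pow, hg, Real.sq_sqrt (hG0 _)]
  rw [ge_iff_le]
  have hfin : ∑ j ∈ F, ‖applyFirstParty (M j) ψ‖ ^ 2 *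
      (1 - ⨆ φ : S, ‖⟪(‖applyFirstParty (M j) ψ‖⁻¹ • applyFirstParty (M j) ψ),
        (φ : EuclideanSpace ℂ (∀ i, ι i))⟫_ℂ‖ ^ 2)
      = 1 - ∑ j ∈ F, ‖applyFirstParty (M j) ψ‖ ^ 2 *
        (⨆ φ : S, ‖⟪(‖applyFirstParty (M j) ψ‖⁻¹ • applyFirstParty (M j) ψ),
          (φ : EuclideanSpace ℂ (∀ i, ι i))⟫_ℂ‖ ^ 2) := by
    have hstep : ∑ j ∈ F, ‖applyFirstParty (M j) ψ‖ ^ 2 *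
        (1 - ⨆ φ : S, ‖⟪(‖applyFirstParty (M j) ψ‖⁻¹ • applyFirstParty (M j) ψ),
          (φ : EuclideanSpace ℂ (∀ i, ι i))⟫_ℂ‖ ^ 2)
        = ∑ j ∈ F, (‖applyFirstParty (M j) ψ‖ ^ 2 - ‖applyFirstParty (M j) ψ‖ ^ 2 *
          (⨆ φ : S, ‖⟪(‖applyFirstParty (M j) ψ‖⁻¹ • applyFirstParty (M j) ψ),
            (φ : EuclideanSpace ℂ (∀ i, ι i))⟫_ℂ‖ ^ 2)) :=
      Finset.sum_congr rfl fun j _ => by ring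
    rw [hstep, Finset.sum_sub_distrib, hsumF]
  rw [hfin]
  linarith [hkey]
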